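/- For the Finsler space with F = e^{−x1}(y2³ + e^{−x1 x3} y3 y1²)^{1/3} on {y1 ≠ 0}, the Lie bracket of X = h₁ + (y2/y1)h₂ and Y = h₃ equals −(y1/2)∂/∂y1 + y3 ∂/∂y3, a vertical vector field; hence the nullity distribution N_{P̊} of the Berwald hv-curvature, spanned by X and Y, is not completely integrable. -/

import Mathlib

open scoped BigOperators

/-- The phase space `ℝ³ × ℝ³` with coordinates `(x, y)`. -/
abbrev E : Type := (Fin 3 → ℝ) × (Fin 3 → ℝ)

/-- The Lie bracket of two vector fields on `E`. -/
noncomputable def lieB (X Y : E → E) (z : E) : E :=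
  fderiv ℝ Y z (X z) - fderiv ℝ X z (Y z)

/-- The Barthel connection coefficients `N^i_j` of
`F = e^{−x1}(y2³ + e^{−x1x3} y3 y1²)^{1/3}`. -/
noncomputable def NN (x y : Fin 3 → ℝ) : Fin 3 → Fin 3 → ℝ := fun i j =>
  (!![-(1 / 2) * (3 + x 2) * y 0, 0, 0;
      -(3 / 4) * y 1, -(3 / 4) * y 0, 0;
      -(3 / 4) * (y 1) ^ 3 * Real.exp ((x 0) * (x 2)) / (y 0) ^ 2,
        (9 / 4) * (y 1) ^ 2 * Real.exp ((x 0) * (x 2)) / (y 0),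
        -(y 2) * (x 0)] : Matrix (Fin 3) (Fin 3) ℝ) i j

/-- The horizontal frame `h_i = ∂/∂x^i − N^j_i ∂/∂y^j` of the Barthel connection. -/
noncomputable def hh (i : Fin 3) : E → E := fun z =>
  (Pi.single i 1, fun j => -NN z.1 z.2 j i)

/-- The nullity vector field `X = h₁ + (y2/y1) h₂`. -/
noncomputable def Xf : E → E := fun z => hh 0 z + (z.2 1 / z.2 0) • hh 1 z

/-! Auxiliary material for the proof. -/

/-- Coordinate projection onto the `i`-th base coordinate. -/
noncomputable def px (i : Fin 3) : E →L[ℝ] ℝ :=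
  (ContinuousLinearMap.proj i).comp (ContinuousLinearMap.fst ℝ (Fin 3 → ℝ) (Fin 3 → ℝ))

/-- Coordinate projection onto the `i`-th fibre coordinate. -/
noncomputable def py (i : Fin 3) : E →L[ℝ] ℝ :=
  (ContinuousLinearMap.proj i).comp (ContinuousLinearMap.snd ℝ (Fin 3 → ℝ) (Fin 3 → ℝ))

@[simp] lemma px_apply (i : Fin 3) (v : E) : px i v = v.1 i := rfl
@[simp] lemma py_apply (i : Fin 3) (v : E) : py i v = v.2 i := rfl

lemma hasFDerivAt_px (i : Fin 3) (z : E) : HasFDerivAt (fun w : E => w.1 i) (px i) z :=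
  (px i).hasFDerivAt
lemma hasFDerivAt_py (i : Fin 3) (z : E) : HasFDerivAt (fun w : E => w.2 i) (py i) z :=
  (py i).hasFDerivAt

lemma hasFDerivAt_vec3 {f0 f1 f2 : E → ℝ} {L0 L1 L2 : E →L[ℝ] ℝ} {z : E}
    (h0 : HasFDerivAt f0 L0 z) (h1 : HasFDerivAt f1 L1 z) (h2 : HasFDerivAt f2 L2 z) :
    HasFDerivAt (fun w => ![f0 w, f1 w, f2 w]) (ContinuousLinearMap.pi ![L0, L1, L2]) z := by
  apply hasFDerivAt_pi''
  intro i
  fin_cases i <;> simpa [ContinuousLinearMap.proj_pi] using ‹_›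

/-- Explicit form of `hh 2`. -/
noncomputable def Yg : E → E := fun w =>
  (![0, 0, 1], ![0, 0, w.2 2 * w.1 0])

/-- Explicit smooth form of `Xf` on `{y1 ≠ 0}`. -/
noncomputable def gX : E → E := fun w =>
  (![1, w.2 1 * (w.2 0)⁻¹, 0],
   ![1/2*(3+w.1 2)*w.2 0, 3/2*w.2 1,
     -(3/2)*(w.2 1 * w.2 1 * w.2 1) * Real.exp (w.1 0 * w.1 2) * (w.2 0 * w.2 0)⁻¹])

lemma hh2_eq : hh 2 = Yg := by
  funext w
  refine Prod.ext ?_ ?_ <;> funext j <;> fin_cases j <;>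
    simp [hh, Yg, NN, Pi.single_apply]

lemma Xf_eq (w : E) (hw : w.2 0 ≠ 0) : Xf w = gX w := by
  refine Prod.ext ?_ ?_ <;> funext j <;> fin_cases j <;>
    simp [Xf, hh, gX, NN, Pi.single_apply] <;> field_simp <;> ring

set_option maxHeartbeats 1000000

/-- on `{y1 ≠ 0}`, the Lie bracket of `X = h₁ + (y2/y1)h₂` and `Y = h₃` equals
the vertical vector field `−(y1/2)∂/∂y1 + y3 ∂/∂y3`; this bracket does not lie in the span of
`X` and `Y`, so the nullity distribution `N_{P̊}` spanned by `X, Y` is not completely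
integrable. -/
theorem statement8 :
    ∀ z : E, z.2 0 ≠ 0 →
      lieB Xf (hh 2) z = ((0 : Fin 3 → ℝ), ![-(z.2 0) / 2, 0, z.2 2]) ∧
      ((0 : Fin 3 → ℝ), (![-(z.2 0) / 2, 0, z.2 2] : Fin 3 → ℝ)) ∉
        Submodule.span ℝ ({Xf z, hh 2 z} : Set E) := by
  intro z hz
  constructor
  · -- the bracket computation
    obtain ⟨LX, hLX, hLXv⟩ :
        ∃ L : E →L[ℝ] E, HasFDerivAt gX L z ∧
          L (Yg z) = ((0 : Fin 3 → ℝ),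
            ![z.2 0 / 2, 0,
              -(3/2)*(z.2 1)^3 * Real.exp (z.1 0 * z.1 2) / (z.2 0)^2 * z.1 0]) := by
      have hz2 : z.2 0 * z.2 0 ≠ 0 := mul_ne_zero hz hz
      have hinv : HasFDerivAt (fun w : E => (w.2 0 * w.2 0)⁻¹)
          ((-((z.2 0 * z.2 0) ^ 2)⁻¹) • (z.2 0 • py 0 + z.2 0 • py 0)) z :=
        (hasDerivAt_inv hz2).comp_hasFDerivAt z ((hasFDerivAt_py 0 z).mul (hasFDerivAt_py 0 z))
      have h1 := (hasFDerivAt_py 1 z).mul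
        ((hasDerivAt_inv hz).comp_hasFDerivAt z (hasFDerivAt_py 0 z))
      have hf0 := (((hasFDerivAt_px 2 z).const_add 3).const_mul (1/2)).mul (hasFDerivAt_py 0 z)
      have hf1 := (hasFDerivAt_py 1 z).const_mul (3/2)
      have hf2 := (((((hasFDerivAt_py 1 z).mul (hasFDerivAt_py 1 z)).mul
          (hasFDerivAt_py 1 z)).const_mul (-(3/2))).mul
          (((hasFDerivAt_px 0 z).mul (hasFDerivAt_px 2 z)).exp)).mul hinv
      refine ⟨?_, ?_, ?_⟩
      rotate_left
      · exact HasFDerivAt.prodMk (hasFDerivAt_vec3 (hasFDerivAt_const _ _) h1 (hasFDerivAt_const _ _))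
          (hasFDerivAt_vec3 hf0 hf1 hf2)
      · refine Prod.ext ?_ ?_ <;> funext j <;> fin_cases j <;>
          simp only [Yg, ContinuousLinearMap.prod_apply, ContinuousLinearMap.pi_apply,
            ContinuousLinearMap.add_apply, ContinuousLinearMap.coe_smul', Pi.smul_apply,
            ContinuousLinearMap.zero_apply, px_apply, py_apply, Matrix.cons_val_zero,
            Matrix.cons_val_one, Matrix.head_cons, Matrix.cons_val_two, Matrix.tail_cons,
            Fin.isValue, smul_eq_mul, Pi.zero_apply, Fin.zero_eta, Fin.mk_one, Fin.reduceFinMk,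
            Function.comp_apply, Pi.mul_apply, Pi.pow_apply] <;>
          field_simp <;> ring
    obtain ⟨LY, hLY, hLYv⟩ :
        ∃ L : E →L[ℝ] E, HasFDerivAt Yg L z ∧
          L (gX z) = ((0 : Fin 3 → ℝ),
            ![0, 0,
              z.2 2 + z.1 0 * (-(3/2)*(z.2 1)^3 * Real.exp (z.1 0 * z.1 2) / (z.2 0)^2)]) := by
      refine ⟨?_, ?_, ?_⟩
      rotate_left
      · exact HasFDerivAt.prodMk (hasFDerivAt_const (![0, 0, 1] : Fin 3 → ℝ) z)
          (hasFDerivAt_vec3 (hasFDerivAt_const (0 : ℝ) z) (hasFDerivAt_const (0 : ℝ) z)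
            ((hasFDerivAt_py 2 z).mul (hasFDerivAt_px 0 z)))
      · refine Prod.ext ?_ ?_ <;> funext j <;> fin_cases j <;>
          simp only [gX, ContinuousLinearMap.prod_apply, ContinuousLinearMap.pi_apply,
            ContinuousLinearMap.add_apply, ContinuousLinearMap.coe_smul', Pi.smul_apply,
            ContinuousLinearMap.zero_apply, px_apply, py_apply, Matrix.cons_val_zero,
            Matrix.cons_val_one, Matrix.head_cons, Matrix.cons_val_two, Matrix.tail_cons,
            Fin.isValue, smul_eq_mul, Pi.zero_apply, Fin.zero_eta, Fin.mk_one, Fin.reduceFinMk,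
            Function.comp_apply, Pi.mul_apply, Pi.pow_apply] <;>
          field_simp <;> ring
    have hev : Xf =ᶠ[nhds z] gX := by
      have hc : Continuous fun w : E => w.2 0 := (continuous_apply 0).comp continuous_snd
      have hmem : {w : E | w.2 0 ≠ 0} ∈ nhds z :=
        (isOpen_compl_singleton.preimage hc).mem_nhds hz
      exact Filter.eventuallyEq_of_mem hmem fun w hw => Xf_eq w hw
    show fderiv ℝ (hh 2) z (Xf z) - fderiv ℝ Xf z (hh 2 z) =
      ((0 : Fin 3 → ℝ), ![-(z.2 0) / 2, 0, z.2 2])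
    rw [hh2_eq, Xf_eq z hz, hev.fderiv_eq, hLX.fderiv, hLY.fderiv, hLXv, hLYv,
      Prod.mk_sub_mk]
    refine Prod.ext (by simp) ?_
    funext j
    fin_cases j <;>
      simp only [Fin.zero_eta, Fin.mk_one, Fin.reduceFinMk, Pi.sub_apply, Matrix.cons_val_zero,
        Matrix.cons_val_one, Matrix.head_cons, Matrix.cons_val_two, Matrix.tail_cons] <;> ring
  · -- not in the span
    intro hmem
    rw [Submodule.mem_span_pair] at hmem
    obtain ⟨a, b, hab⟩ := hmem
    have h1 := congrFun (congrArg Prod.fst hab) 0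
    have h2 := congrFun (congrArg Prod.fst hab) 2
    simp [Xf, hh, Pi.single_apply] at h1 h2
    have h3 := congrFun (congrArg Prod.snd hab) 0
    rw [h1, h2] at h3
    simp [Xf, hh, NN] at h3
    apply hz
    linarith
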